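/- Let E = ((m+1)/(m+2)) t d/dt. The differential equation −q^{-1} = φ^{-1} + E(φ^{-1}), where q = −t − λ, has the unique formal power series solution φ^{-1} = λ^{-1} ∑_{i≥0} ((m+2)/(m+2+i(m+1))) (−t/λ)^i in ℚ[[t/λ]]·λ^{-1}. -/

import Mathlib

open PowerSeries

/-- With `E = ((m+1)/(m+2)) t d/dt` and `q = −t−λ` (a power series in `t`),
the differential equation `−q⁻¹ = φ⁻¹ + E(φ⁻¹)` has the unique formal power
series solution `φ⁻¹ = λ⁻¹ ∑_{i≥0} ((m+2)/(m+2+i(m+1))) (−t/λ)^i`. -/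
theorem unique_solution_qde {K : Type*} [Field K] [CharZero K]
    (m : ℕ) (lam : K) (hlam : lam ≠ 0) (u : K⟦X⟧) :
    u + C (((m : K) + 1) / ((m : K) + 2)) * X * (PowerSeries.derivative K u)
        = -(-(X + C lam))⁻¹
      ↔ u = PowerSeries.mk (fun i =>
          lam⁻¹ * (((m : K) + 2) / (((m : K) + 2) + (i : K) * ((m : K) + 1)))
            * (-lam⁻¹) ^ i) := by
  set c : K := ((m : K) + 1) / ((m : K) + 2) with hc
  have hm2 : ((m : K) + 2) ≠ 0 := by
    have h : ((m : K) + 2) = ((m + 2 : ℕ) : K) := by push_cast; ring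
    rw [h]; exact_mod_cast Nat.succ_ne_zero (m + 1)
  have hden : ∀ n : ℕ, ((m : K) + 2) + (n : K) * ((m : K) + 1) ≠ 0 := by
    intro n
    have h : ((m : K) + 2) + (n : K) * ((m : K) + 1)
        = ((m + 2 + n * (m + 1) : ℕ) : K) := by push_cast; ring
    rw [h]
    exact Nat.cast_ne_zero.mpr (by omega)
  have ha : ∀ n : ℕ, (1 + c * n) ≠ 0 := by
    intro n
    have h : 1 + c * n = (((m : K) + 2) + (n : K) * ((m : K) + 1)) / ((m : K) + 2) := by
      rw [hc]; field_simp
    rw [h]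
    exact div_ne_zero (hden n) hm2
  -- compute the RHS inverse
  have hv : -(-(X + C lam))⁻¹ = PowerSeries.mk (fun n => lam⁻¹ * (-lam⁻¹) ^ n) := by
    have hcc : constantCoeff (-(X + C lam)) ≠ 0 := by
      simpa using neg_ne_zero.mpr hlam
    rw [neg_eq_iff_eq_neg, PowerSeries.inv_eq_iff_mul_eq_one hcc]
    ext n
    cases n with
    | zero => simp [hlam]
    | succ k =>
      rw [neg_mul_neg]
      rw [show PowerSeries.mk (fun n => lam⁻¹ * (-lam⁻¹) ^ n) * (X + C lam)
        = X * PowerSeries.mk (fun n => lam⁻¹ * (-lam⁻¹) ^ n)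
          + C lam * PowerSeries.mk (fun n => lam⁻¹ * (-lam⁻¹) ^ n) by ring]
      rw [map_add, coeff_succ_X_mul, coeff_C_mul, coeff_mk, coeff_mk, coeff_one]
      simp only [Nat.succ_ne_zero, if_false]
      rw [pow_succ]
      field_simp
      ring
  have key : ∀ n : ℕ, coeff n (u + C c * X * (PowerSeries.derivative K u))
      = (1 + c * n) * coeff n u := by
    intro n
    rw [map_add, mul_assoc, coeff_C_mul]
    cases n with
    | zero => simp
    | succ k =>
      rw [coeff_succ_X_mul, coeff_derivative]
      push_cast
      ring
  rw [hv, PowerSeries.ext_iff, PowerSeries.ext_iff]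
  apply forall_congr'
  intro n
  rw [key n, coeff_mk, coeff_mk, mul_comm, ← eq_div_iff (ha n)]
  have heq : lam⁻¹ * (-lam⁻¹) ^ n / (1 + c * n)
      = lam⁻¹ * (((m : K) + 2) / (((m : K) + 2) + (n : K) * ((m : K) + 1)))
        * (-lam⁻¹) ^ n := by
    rw [hc]
    field_simp
  rw [heq]
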